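/- Let h ⊆ g be a Lie subalgebra and h° = {α ∈ g* : α(X) = 0 for all X ∈ h} its annihilator. Then h × h° is a Lie subalgebra of the Drinfel'd double D(g) = g × g* if and only if δ(X) ∈ h⊗g + g⊗h for all X ∈ h (the coisotropy condition on h). -/

import Mathlib

set_option synthInstance.maxHeartbeats 1000000
set_option maxHeartbeats 1000000

open TensorProduct

private lemma basis_repr_eq_pairing {V : Type*} [AddCommGroup V] [Module ℝ V]
    {ι : Type*} (B : Module.Basis ι ℝ V) (i j : ι) (u : V ⊗[ℝ] V) :
    (B.tensorProduct B).repr u (i, j) =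
      TensorProduct.lid ℝ ℝ (TensorProduct.map (B.coord i) (B.coord j) u) := by
  induction u using TensorProduct.induction_on with
  | zero => simp
  | tmul x y =>
      simp [Module.Basis.tensorProduct_repr_tmul_apply, Module.Basis.coord_apply, mul_comm]
  | add x y hx hy => simp [map_add, hx, hy]

private lemma tensor_eq_zero_of_coords {V : Type*} [AddCommGroup V] [Module ℝ V]
    {ι : Type*} (B : Module.Basis ι ℝ V) (u : V ⊗[ℝ] V)
    (hu : ∀ i j : ι, TensorProduct.lid ℝ ℝ (TensorProduct.map (B.coord i) (B.coord j) u) = 0) :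
    u = 0 := by
  have : (B.tensorProduct B).repr u = 0 := by
    ext p
    rcases p with ⟨i, j⟩
    rw [basis_repr_eq_pairing B i j u, hu i j]
    rfl
  simpa using (B.tensorProduct B).repr.map_eq_zero_iff.mp (by simpa using this)

private lemma key_mem_iff {g : Type*} [AddCommGroup g] [Module ℝ g] [FiniteDimensional ℝ g]
    (h : Submodule ℝ g) (t : g ⊗[ℝ] g) :
    t ∈ LinearMap.range (TensorProduct.map h.subtype (LinearMap.id : g →ₗ[ℝ] g))
        ⊔ LinearMap.range (TensorProduct.map (LinearMap.id : g →ₗ[ℝ] g) h.subtype)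
      ↔ ∀ α β : Module.Dual ℝ g, (∀ Z ∈ h, α Z = 0) → (∀ Z ∈ h, β Z = 0) →
          TensorProduct.lid ℝ ℝ (TensorProduct.map α β t) = 0 := by
  constructor
  · intro ht α β hα hβ
    rw [Submodule.mem_sup] at ht
    obtain ⟨u, hu, v, hv, rfl⟩ := ht
    obtain ⟨s, rfl⟩ := hu
    obtain ⟨s', rfl⟩ := hv
    have hαs : α ∘ₗ h.subtype = 0 := by
      ext z; exact hα z z.2
    have hβs : β ∘ₗ h.subtype = 0 := by
      ext z; exact hβ z z.2
    have e1 : TensorProduct.map α β (TensorProduct.map h.subtype LinearMap.id s) = 0 := by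
      rw [← LinearMap.comp_apply, ← TensorProduct.map_comp, hαs,
        TensorProduct.map_zero_left, LinearMap.zero_apply]
    have e2 : TensorProduct.map α β (TensorProduct.map LinearMap.id h.subtype s') = 0 := by
      rw [← LinearMap.comp_apply, ← TensorProduct.map_comp, hβs,
        TensorProduct.map_zero_right, LinearMap.zero_apply]
    rw [map_add, e1, e2]
    simp
  · intro H
    have hker : LinearMap.ker (TensorProduct.map h.mkQ h.mkQ)
        = LinearMap.range (LinearMap.lTensor g h.subtype)
          ⊔ LinearMap.range (LinearMap.rTensor g h.subtype) :=
      TensorProduct.map_ker (LinearMap.exact_subtype_mkQ h) (Submodule.mkQ_surjective h)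
        (LinearMap.exact_subtype_mkQ h) (Submodule.mkQ_surjective h)
    have hmem : t ∈ LinearMap.ker (TensorProduct.map h.mkQ h.mkQ) := by
      rw [LinearMap.mem_ker]
      set B := Module.Free.chooseBasis ℝ (g ⧸ h)
      apply tensor_eq_zero_of_coords B
      intro i j
      rw [← LinearMap.comp_apply, ← TensorProduct.map_comp]
      apply H
      · intro Z hZ
        simp [Submodule.mkQ_apply, (Submodule.Quotient.mk_eq_zero h).mpr hZ]
      · intro Z hZ
        simp [Submodule.mkQ_apply, (Submodule.Quotient.mk_eq_zero h).mpr hZ]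
    rw [hker] at hmem
    rw [sup_comm] at hmem
    convert hmem using 3 <;> rfl

/-- For a Lie subalgebra `h ⊆ g` with annihilator `h°`, the subspace
`h × h°` is a Lie subalgebra of the Drinfel'd double `D(g) = g × g*` if and only if
`δ(X) ∈ h⊗g + g⊗h` for all `X ∈ h` (the coisotropy condition). -/
theorem coisotropic_iff_subalgebra_of_double
    (g : Type*) [LieRing g] [LieAlgebra ℝ g] [FiniteDimensional ℝ g]
    (br : Module.Dual ℝ g →ₗ[ℝ] Module.Dual ℝ g →ₗ[ℝ] Module.Dual ℝ g)
    (br_alt : ∀ α : Module.Dual ℝ g, br α α = 0)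
    (br_jacobi : ∀ α β γ : Module.Dual ℝ g,
      br (br α β) γ + br (br β γ) α + br (br γ α) β = 0)
    (δ : g →ₗ[ℝ] g ⊗[ℝ] g)
    (hδ : ∀ (X : g) (α β : Module.Dual ℝ g),
      TensorProduct.lid ℝ ℝ (TensorProduct.map α β (δ X)) = br α β X)
    (cocycle : ∀ X Y : g,
      δ ⁅X, Y⁆ =
        (TensorProduct.map (LieAlgebra.ad ℝ g X : g →ₗ[ℝ] g) (LinearMap.id : g →ₗ[ℝ] g)
            + TensorProduct.map (LinearMap.id : g →ₗ[ℝ] g) (LieAlgebra.ad ℝ g X : g →ₗ[ℝ] g)) (δ Y)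
          - (TensorProduct.map (LieAlgebra.ad ℝ g Y : g →ₗ[ℝ] g) (LinearMap.id : g →ₗ[ℝ] g)
            + TensorProduct.map (LinearMap.id : g →ₗ[ℝ] g) (LieAlgebra.ad ℝ g Y : g →ₗ[ℝ] g)) (δ X))
    (a : Module.Dual ℝ g →ₗ[ℝ] g →ₗ[ℝ] g)
    (ha : ∀ (α : Module.Dual ℝ g) (X : g) (β : Module.Dual ℝ g),
      β (a α X) = br α β X)
    (Dbr : g × Module.Dual ℝ g → g × Module.Dual ℝ g → g × Module.Dual ℝ g)
    (hDbr : ∀ (X Y : g) (α β : Module.Dual ℝ g),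
      Dbr (X, α) (Y, β) =
        (⁅X, Y⁆ + a β X - a α Y,
          br α β + α ∘ₗ (LieAlgebra.ad ℝ g Y : g →ₗ[ℝ] g)
            - β ∘ₗ (LieAlgebra.ad ℝ g X : g →ₗ[ℝ] g))) :
    ∀ h : LieSubalgebra ℝ g,
      -- `h × h°` is closed under the double bracket
      (∀ (X Y : g) (α β : Module.Dual ℝ g), X ∈ h → Y ∈ h →
        (∀ Z ∈ h, α Z = 0) → (∀ Z ∈ h, β Z = 0) →
        (Dbr (X, α) (Y, β)).1 ∈ h ∧ ∀ Z ∈ h, (Dbr (X, α) (Y, β)).2 Z = 0)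
      ↔
      -- coisotropy: `δ(X) ∈ h ⊗ g + g ⊗ h` for all `X ∈ h`
      (∀ X ∈ h, δ X ∈
        LinearMap.range (TensorProduct.map (h : Submodule ℝ g).subtype
          (LinearMap.id : g →ₗ[ℝ] g))
        ⊔ LinearMap.range (TensorProduct.map (LinearMap.id : g →ₗ[ℝ] g)
          (h : Submodule ℝ g).subtype)) := by
  intro h
  constructor
  · -- closure → coisotropy
    intro Hcl X hX
    rw [key_mem_iff]
    intro α β hα hβ
    rw [hδ]
    have := (Hcl 0 0 α β h.zero_mem h.zero_mem hα hβ).2 X hX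
    rw [hDbr] at this
    simpa using this
  · -- coisotropy → closure
    intro Hco X Y α β hX hY hα hβ
    have key := fun (W : g) (hW : W ∈ h) =>
      (key_mem_iff (h : Submodule ℝ g) (δ W)).mp (Hco W hW)
    have mem_of : ∀ v : g, (∀ γ : Module.Dual ℝ g, (∀ Z ∈ h, γ Z = 0) → γ v = 0) → v ∈ h := by
      intro v hv
      have heq : ((h : Submodule ℝ g).dualAnnihilator).dualCoannihilator = (h : Submodule ℝ g) :=
        Subspace.dualAnnihilator_dualCoannihilator_eq
      rw [← LieSubalgebra.mem_toSubmodule, ← heq, Submodule.mem_dualCoannihilator]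
      intro φ hφ
      exact hv φ (Submodule.mem_dualAnnihilator φ |>.mp hφ)
    constructor
    · rw [hDbr]
      have h1 : a β X ∈ h := by
        apply mem_of
        intro γ hγ
        rw [ha]
        rw [← hδ]
        exact key X hX β γ hβ hγ
      have h2 : a α Y ∈ h := by
        apply mem_of
        intro γ hγ
        rw [ha]
        rw [← hδ]
        exact key Y hY α γ hα hγ
      exact sub_mem (add_mem (h.lie_mem hX hY) h1) h2
    · intro Z hZ
      rw [hDbr]
      have hbr : br α β Z = 0 := by
        rw [← hδ]
        exact key Z hZ α β hα hβ
      have h1 : α ⁅Y, Z⁆ = 0 := hα _ (h.lie_mem hY hZ)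
      have h2 : β ⁅X, Z⁆ = 0 := hβ _ (h.lie_mem hX hZ)
      simp [LieAlgebra.ad_apply, hbr, h1, h2]
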